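/- For every real number ℓ ≥ 0 and every finite set P of r-cliques of G, let S_ℓ denote the set of r-cliques of G that are not in P and whose (r,s)-clique core number is at most ℓ. Then the number of s-cliques of G that are residual with respect to P and contain at least one member of S_ℓ is at most ℓ · |S_ℓ|. -/

import Mathlib

open Finset

variable {V : Type*}

/-- The `(r,s)`-clique core number of an `r`-clique `R` in `G`: the largest `c ≥ 1` for which
there is a set `𝒮` of `s`-cliques of `G` such that `R` is contained in at least one member of
`𝒮` and every `r`-clique contained in any member of `𝒮` is contained in at least `c` members
of `𝒮`; `0` if no such `c` exists. -/
noncomputable def coreNumber [Fintype V] [DecidableEq V] (G : SimpleGraph V)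
    [DecidableRel G.Adj] (r s : ℕ) (R : Finset V) : ℕ :=
  sSup {c : ℕ | 1 ≤ c ∧ ∃ 𝒮 : Finset (Finset V),
    (∀ S ∈ 𝒮, S ∈ G.cliqueFinset s) ∧ (∃ S ∈ 𝒮, R ⊆ S) ∧
    ∀ R' ∈ G.cliqueFinset r, (∃ S ∈ 𝒮, R' ⊆ S) →
      c ≤ (𝒮.filter (fun S => R' ⊆ S)).card}


section Aux

variable [Fintype V] [DecidableEq V] (G : SimpleGraph V) [DecidableRel G.Adj] (r s : ℕ)

lemma coreSet_bddAbove (R : Finset V) (hR : R ∈ G.cliqueFinset r) :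
    BddAbove {c : ℕ | 1 ≤ c ∧ ∃ 𝒮 : Finset (Finset V),
      (∀ S ∈ 𝒮, S ∈ G.cliqueFinset s) ∧ (∃ S ∈ 𝒮, R ⊆ S) ∧
      ∀ R' ∈ G.cliqueFinset r, (∃ S ∈ 𝒮, R' ⊆ S) →
        c ≤ (𝒮.filter (fun S => R' ⊆ S)).card} := by
  refine ⟨(G.cliqueFinset s).card, ?_⟩
  rintro c ⟨hc1, 𝒮, h1, h2, h3⟩
  calc c ≤ (𝒮.filter (fun S => R ⊆ S)).card := h3 R hR h2
    _ ≤ 𝒮.card := card_filter_le _ _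
    _ ≤ (G.cliqueFinset s).card := card_le_card (fun S hS => h1 S hS)

lemma exists_witness (R : Finset V) (hR : R ∈ G.cliqueFinset r) (c : ℕ)
    (hc : 1 ≤ c) (h : c ≤ coreNumber G r s R) :
    ∃ 𝒮 : Finset (Finset V),
      (∀ S ∈ 𝒮, S ∈ G.cliqueFinset s) ∧ (∃ S ∈ 𝒮, R ⊆ S) ∧
      ∀ R' ∈ G.cliqueFinset r, (∃ S ∈ 𝒮, R' ⊆ S) →
        c ≤ (𝒮.filter (fun S => R' ⊆ S)).card := by
  classical
  have hne : {c : ℕ | 1 ≤ c ∧ ∃ 𝒮 : Finset (Finset V),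
      (∀ S ∈ 𝒮, S ∈ G.cliqueFinset s) ∧ (∃ S ∈ 𝒮, R ⊆ S) ∧
      ∀ R' ∈ G.cliqueFinset r, (∃ S ∈ 𝒮, R' ⊆ S) →
        c ≤ (𝒮.filter (fun S => R' ⊆ S)).card}.Nonempty := by
    by_contra h'
    rw [Set.not_nonempty_iff_eq_empty] at h'
    have : coreNumber G r s R = 0 := by
      unfold coreNumber; rw [h']; exact csSup_empty
    omega
  have hmem := Nat.sSup_mem hne (coreSet_bddAbove G r s R hR)
  obtain ⟨h1, 𝒮, hS1, hS2, hS3⟩ := hmem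
  exact ⟨𝒮, hS1, hS2, fun R' hR' hcov =>
    le_trans h (hS3 R' hR' hcov)⟩

lemma core_ge (R : Finset V) (hR : R ∈ G.cliqueFinset r) (c : ℕ)
    (hc : 1 ≤ c)
    (h : ∃ 𝒮 : Finset (Finset V),
      (∀ S ∈ 𝒮, S ∈ G.cliqueFinset s) ∧ (∃ S ∈ 𝒮, R ⊆ S) ∧
      ∀ R' ∈ G.cliqueFinset r, (∃ S ∈ 𝒮, R' ⊆ S) →
        c ≤ (𝒮.filter (fun S => R' ⊆ S)).card) :
    c ≤ coreNumber G r s R :=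
  le_csSup (coreSet_bddAbove G r s R hR) ⟨hc, h⟩

end Aux

section Main

variable [Fintype V] [DecidableEq V] (G : SimpleGraph V) [DecidableRel G.Adj] (r s : ℕ)
  (ℓ : ℝ)

noncomputable def Slp (P : Finset (Finset V)) : Finset (Finset V) :=
  (G.cliqueFinset r).filter (fun R => R ∉ P ∧ (coreNumber G r s R : ℝ) ≤ ℓ)

noncomputable def Tp (P : Finset (Finset V)) : Finset (Finset V) :=
  (G.cliqueFinset s).filter
    (fun S => (∀ Q ∈ P, ¬ Q ⊆ S) ∧ ∃ R ∈ Slp G r s ℓ P, R ⊆ S)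

variable {G r s ℓ}

lemma exists_low (hℓ : 0 ≤ ℓ) (P : Finset (Finset V))
    (hT : (Tp G r s ℓ P).Nonempty) :
    ∃ R ∈ Slp G r s ℓ P,
      1 ≤ ((Tp G r s ℓ P).filter (fun S => R ⊆ S)).card ∧
      ((Tp G r s ℓ P).filter (fun S => R ⊆ S)).card ≤ ⌊ℓ⌋₊ := by
  classical
  by_contra hcon
  push_neg at hcon
  set c := ⌊ℓ⌋₊ + 1 with hc
  -- choice of witnesses for high-core r-cliques
  set W : Finset V → Finset (Finset V) := fun R' =>
    if h : R' ∈ G.cliqueFinset r ∧ c ≤ coreNumber G r s R' then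
      (exists_witness G r s R' h.1 c (by omega) h.2).choose else ∅ with hW
  have hWspec : ∀ R', R' ∈ G.cliqueFinset r → c ≤ coreNumber G r s R' →
      (∀ S ∈ W R', S ∈ G.cliqueFinset s) ∧ (∃ S ∈ W R', R' ⊆ S) ∧
      ∀ R'' ∈ G.cliqueFinset r, (∃ S ∈ W R', R'' ⊆ S) →
        c ≤ ((W R').filter (fun S => R'' ⊆ S)).card := by
    intro R' h1 h2
    simp only [hW, dif_pos (And.intro h1 h2)]
    exact (exists_witness G r s R' h1 c (by omega) h2).choose_spec
  set B : Finset (Finset V) :=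
    (G.cliqueFinset r).filter (fun R' => c ≤ coreNumber G r s R') with hB
  set 𝒮 : Finset (Finset V) := Tp G r s ℓ P ∪ B.biUnion W with h𝒮
  -- properties of 𝒮
  have h𝒮clique : ∀ S ∈ 𝒮, S ∈ G.cliqueFinset s := by
    intro S hS
    rw [h𝒮, mem_union] at hS
    rcases hS with hS | hS
    · exact mem_of_mem_filter S hS
    · obtain ⟨R', hR', hSW⟩ := mem_biUnion.1 hS
      rw [hB, mem_filter] at hR'
      exact (hWspec R' hR'.1 hR'.2).1 S hSW
  have hdeg : ∀ R'' ∈ G.cliqueFinset r, (∃ S ∈ 𝒮, R'' ⊆ S) →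
      c ≤ (𝒮.filter (fun S => R'' ⊆ S)).card := by
    intro R'' hR'' ⟨S, hS, hsub⟩
    rw [h𝒮, mem_union] at hS
    have hmono : ∀ (A : Finset (Finset V)), A ⊆ 𝒮 →
        (A.filter (fun S => R'' ⊆ S)).card ≤ (𝒮.filter (fun S => R'' ⊆ S)).card :=
      fun A hA => card_le_card (filter_subset_filter _ hA)
    rcases hS with hS | hS
    · -- S in the residual set
      have hSP : ∀ Q ∈ P, ¬ Q ⊆ S := ((mem_filter.1 hS).2).1
      have hRP : R'' ∉ P := fun h => hSP R'' h hsub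
      by_cases hcore : c ≤ coreNumber G r s R''
      · -- use witness for R''
        obtain ⟨_, ⟨S', hS', hsub'⟩, h3⟩ := hWspec R'' hR'' hcore
        have hWsub : W R'' ⊆ 𝒮 := by
          rw [h𝒮]
          exact (subset_biUnion_of_mem W
            (by rw [hB, mem_filter]; exact ⟨hR'', hcore⟩)).trans subset_union_right
        exact le_trans (h3 R'' hR'' ⟨S', hS', hsub'⟩) (hmono _ hWsub)
      · -- R'' is in Slp, use hcon
        have hcore' : (coreNumber G r s R'' : ℝ) ≤ ℓ := by
          have : coreNumber G r s R'' ≤ ⌊ℓ⌋₊ := by omega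
          exact le_trans (by exact_mod_cast this) (Nat.floor_le hℓ)
        have hRS : R'' ∈ Slp G r s ℓ P := by
          rw [Slp, mem_filter]; exact ⟨hR'', hRP, hcore'⟩
        have h1 : 1 ≤ ((Tp G r s ℓ P).filter (fun S => R'' ⊆ S)).card :=
          card_pos.2 ⟨S, mem_filter.2 ⟨hS, hsub⟩⟩
        have h2 := hcon R'' hRS h1
        have h3 : c ≤ ((Tp G r s ℓ P).filter (fun S => R'' ⊆ S)).card := by omega
        exact le_trans h3 (hmono _ (by rw [h𝒮]; exact subset_union_left))
    · -- S in a witness set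
      obtain ⟨R', hR', hSW⟩ := mem_biUnion.1 hS
      rw [hB, mem_filter] at hR'
      obtain ⟨_, _, h3⟩ := hWspec R' hR'.1 hR'.2
      have hWsub : W R' ⊆ 𝒮 := by
        rw [h𝒮]
        exact (subset_biUnion_of_mem W
          (by rw [hB, mem_filter]; exact hR')).trans subset_union_right
      exact le_trans (h3 R'' hR'' ⟨S, hSW, hsub⟩) (hmono _ hWsub)
  -- now take any S₀ ∈ Tp and R₀ ∈ Slp with R₀ ⊆ S₀
  obtain ⟨S₀, hS₀⟩ := hT
  obtain ⟨_, ⟨R₀, hR₀, hsub₀⟩⟩ := (mem_filter.1 hS₀).2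
  have hR₀c : R₀ ∈ G.cliqueFinset r := mem_of_mem_filter R₀ hR₀
  have hge : c ≤ coreNumber G r s R₀ := by
    apply core_ge G r s R₀ hR₀c c (by omega)
    exact ⟨𝒮, h𝒮clique, ⟨S₀, by rw [h𝒮]; exact mem_union_left _ hS₀, hsub₀⟩, hdeg⟩
  have hle : (coreNumber G r s R₀ : ℝ) ≤ ℓ := ((mem_filter.1 hR₀).2).2
  have : (c : ℝ) ≤ ℓ := le_trans (by exact_mod_cast hge) hle
  have : ℓ < c := by
    rw [hc]; push_cast; exact Nat.lt_floor_add_one ℓ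
  linarith

lemma key (hℓ : 0 ≤ ℓ) :
    ∀ n : ℕ, ∀ P : Finset (Finset V),
    (Slp G r s ℓ P).card ≤ n →
    ((Tp G r s ℓ P).card : ℝ) ≤ ℓ * (Slp G r s ℓ P).card := by
  intro n
  induction n with
  | zero =>
    intro P hcard
    have hS : Slp G r s ℓ P = ∅ := card_eq_zero.1 (Nat.le_zero.1 hcard)
    have hT : Tp G r s ℓ P = ∅ := by
      rw [eq_empty_iff_forall_notMem]
      intro S hS'
      obtain ⟨_, ⟨R, hR, _⟩⟩ := (mem_filter.1 hS').2
      simp [hS] at hR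
    simp [hS, hT]
  | succ n ih =>
    intro P hcard
    rcases (Tp G r s ℓ P).eq_empty_or_nonempty with hT | hT
    · rw [hT]
      simp only [card_empty, Nat.cast_zero]
      positivity
    obtain ⟨R, hRS, hd1, hd2⟩ := exists_low hℓ P hT
    have hRc : R ∈ G.cliqueFinset r := mem_of_mem_filter R hRS
    set P' : Finset (Finset V) := insert R P with hP'
    have hSlp' : Slp G r s ℓ P' = (Slp G r s ℓ P).erase R := by
      ext R'
      simp only [Slp, mem_filter, mem_erase, hP', mem_insert, not_or]
      tauto
    have hTp' : Tp G r s ℓ P' = (Tp G r s ℓ P).filter (fun S => ¬ R ⊆ S) := by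
      ext S
      simp only [Tp]
      rw [hSlp']
      simp only [mem_filter, hP', mem_insert, mem_erase]
      constructor
      · rintro ⟨hSc, hQ, ⟨R', ⟨hne, hR'⟩, hsub⟩⟩
        exact ⟨⟨hSc, fun Q hQ' => hQ Q (Or.inr hQ'), ⟨R', hR', hsub⟩⟩,
          hQ R (Or.inl rfl)⟩
      · rintro ⟨⟨hSc, hQ, ⟨R', hR', hsub⟩⟩, hnR⟩
        refine ⟨hSc, ?_, ⟨R', ⟨?_, hR'⟩, hsub⟩⟩
        · rintro Q (rfl | hQ')
          · exact hnR
          · exact hQ Q hQ'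
        · rintro rfl; exact hnR hsub
    have hcard' : (Slp G r s ℓ P').card ≤ n := by
      rw [hSlp', card_erase_of_mem hRS]
      omega
    have hcardeq : (Slp G r s ℓ P').card = (Slp G r s ℓ P).card - 1 := by
      rw [hSlp', card_erase_of_mem hRS]
    have hpos : 1 ≤ (Slp G r s ℓ P).card := card_pos.2 ⟨R, hRS⟩
    have hsplit : (Tp G r s ℓ P').card
        + ((Tp G r s ℓ P).filter (fun S => R ⊆ S)).card = (Tp G r s ℓ P).card := by
      rw [hTp', add_comm]
      exact card_filter_add_card_filter_not (p := fun S => R ⊆ S)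
    have hdℓ : (((Tp G r s ℓ P).filter (fun S => R ⊆ S)).card : ℝ) ≤ ℓ :=
      le_trans (by exact_mod_cast hd2) (Nat.floor_le hℓ)
    have hIH := ih P' hcard'
    have hcast : ((Slp G r s ℓ P').card : ℝ) = (Slp G r s ℓ P).card - 1 := by
      rw [hcardeq]
      push_cast [hpos]
      ring
    rw [hcast] at hIH
    have : ((Tp G r s ℓ P).card : ℝ)
        = ((Tp G r s ℓ P').card : ℝ)
          + (((Tp G r s ℓ P).filter (fun S => R ⊆ S)).card : ℝ) := by
      rw [← hsplit]; push_cast; ring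
    rw [this]
    calc ((Tp G r s ℓ P').card : ℝ)
          + (((Tp G r s ℓ P).filter (fun S => R ⊆ S)).card : ℝ)
        ≤ ℓ * ((Slp G r s ℓ P).card - 1) + ℓ := by linarith
      _ = ℓ * (Slp G r s ℓ P).card := by ring

end Main

/-- For every real `ℓ ≥ 0` and every finite set `P` of `r`-cliques of `G`, letting `Sl` be the
set of `r`-cliques of `G` not in `P` with `(r,s)`-clique core number at most `ℓ`, the number of
`s`-cliques of `G` that are residual with respect to `P` and contain at least one member of
`Sl` is at most `ℓ * |Sl|`. -/
theorem stmt0 [Fintype V] [DecidableEq V] (G : SimpleGraph V) [DecidableRel G.Adj]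
    (r s : ℕ) (hr : 1 ≤ r) (hrs : r < s)
    (ℓ : ℝ) (hℓ : 0 ≤ ℓ)
    (P : Finset (Finset V)) (hP : ∀ Q ∈ P, Q ∈ G.cliqueFinset r)
    (Sl : Finset (Finset V))
    (hSl : Sl = (G.cliqueFinset r).filter
      (fun R => R ∉ P ∧ (coreNumber G r s R : ℝ) ≤ ℓ)) :
    (((G.cliqueFinset s).filter
        (fun S => (∀ Q ∈ P, ¬ Q ⊆ S) ∧ ∃ R ∈ Sl, R ⊆ S)).card : ℝ)
      ≤ ℓ * Sl.card := by
  have hSl' : Sl = Slp G r s ℓ P := by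
    rw [hSl, Slp]
  have hT : (G.cliqueFinset s).filter
      (fun S => (∀ Q ∈ P, ¬ Q ⊆ S) ∧ ∃ R ∈ Sl, R ⊆ S) = Tp G r s ℓ P := by
    rw [hSl', Tp]
  rw [hT, hSl']
  exact key hℓ (Slp G r s ℓ P).card P le_rfl
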